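/- Let L ∈ ℕ, let V₀, …, V_L and C₀, …, C_L be positive real numbers, and let ε > 0. Define N*_ℓ = (2/ε²)·√(V_ℓ/C_ℓ)·Σ_{ℓ'=0}^{L} √(V_{ℓ'}·C_{ℓ'}) for each ℓ. Then: (i) Σ_{ℓ=0}^{L} V_ℓ/N*_ℓ = ε²/2; (ii) Σ_{ℓ=0}^{L} N*_ℓ·C_ℓ = (2/ε²)·(Σ_{ℓ=0}^{L} √(V_ℓ·C_ℓ))²; and (iii) for every choice of positive real numbers N₀, …, N_L satisfying Σ_{ℓ=0}^{L} V_ℓ/N_ℓ ≤ ε²/2, one has Σ_{ℓ=0}^{L} N_ℓ·C_ℓ ≥ (2/ε²)·(Σ_{ℓ=0}^{L} √(V_ℓ·C_ℓ))². In particular, the allocation N*_ℓ minimizes the total cost Σ_ℓ N_ℓ·C_ℓ among all positive allocations meeting the variance constraint Σ_ℓ V_ℓ/N_ℓ ≤ ε²/2. -/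

import Mathlib

open Finset

/-- **Optimality of the MLMC sample allocation.**
With level variances `V ℓ > 0` and per-sample costs `C ℓ > 0`, the allocation
`N*_ℓ = (2/ε²)·√(V_ℓ/C_ℓ)·Σ_{ℓ'} √(V_{ℓ'} C_{ℓ'})` attains estimator variance exactly
`ε²/2`, has total cost `(2/ε²)·(Σ_ℓ √(V_ℓ C_ℓ))²`, and this cost is minimal among all
positive real allocations meeting the variance constraint `Σ_ℓ V_ℓ/N_ℓ ≤ ε²/2`. -/
theorem mlmc_optimal_allocation
    (L : ℕ) (V C : ℕ → ℝ)
    (hV : ∀ ℓ ≤ L, 0 < V ℓ) (hC : ∀ ℓ ≤ L, 0 < C ℓ)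
    (ε : ℝ) (hε : 0 < ε)
    (Nstar : ℕ → ℝ)
    (hNstar : ∀ ℓ ≤ L, Nstar ℓ = (2 / ε ^ 2) * Real.sqrt (V ℓ / C ℓ) *
      ∑ ℓ' ∈ range (L + 1), Real.sqrt (V ℓ' * C ℓ')) :
    (∑ ℓ ∈ range (L + 1), V ℓ / Nstar ℓ = ε ^ 2 / 2) ∧
    (∑ ℓ ∈ range (L + 1), Nstar ℓ * C ℓ
      = (2 / ε ^ 2) * (∑ ℓ ∈ range (L + 1), Real.sqrt (V ℓ * C ℓ)) ^ 2) ∧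
    (∀ N : ℕ → ℝ, (∀ ℓ ≤ L, 0 < N ℓ) →
      (∑ ℓ ∈ range (L + 1), V ℓ / N ℓ ≤ ε ^ 2 / 2) →
      (2 / ε ^ 2) * (∑ ℓ ∈ range (L + 1), Real.sqrt (V ℓ * C ℓ)) ^ 2
        ≤ ∑ ℓ ∈ range (L + 1), N ℓ * C ℓ) := by
  set S := ∑ ℓ' ∈ range (L + 1), Real.sqrt (V ℓ' * C ℓ') with hSdef
  have hε2 : (0:ℝ) < ε ^ 2 := by positivity
  have hS : 0 < S := by
    apply Finset.sum_pos
    · intro ℓ hℓ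
      have hℓ' := Finset.mem_range_succ_iff.mp hℓ
      exact Real.sqrt_pos.mpr (mul_pos (hV ℓ hℓ') (hC ℓ hℓ'))
    · exact ⟨0, Finset.mem_range.mpr (Nat.succ_pos L)⟩
  have key : ∀ ℓ ≤ L, Real.sqrt (V ℓ * C ℓ) = Real.sqrt (V ℓ) * Real.sqrt (C ℓ) :=
    fun ℓ hℓ => Real.sqrt_mul (hV ℓ hℓ).le _
  have key2 : ∀ ℓ ≤ L, Real.sqrt (V ℓ / C ℓ) = Real.sqrt (V ℓ) / Real.sqrt (C ℓ) :=
    fun ℓ hℓ => Real.sqrt_div (hV ℓ hℓ).le _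
  have h1 : ∑ ℓ ∈ range (L + 1), V ℓ / Nstar ℓ = ε ^ 2 / 2 := by
    have : ∀ ℓ ∈ range (L + 1), V ℓ / Nstar ℓ
        = ε ^ 2 / (2 * S) * Real.sqrt (V ℓ * C ℓ) := by
      intro ℓ hℓ
      have hℓ' := Finset.mem_range_succ_iff.mp hℓ
      have hv := hV ℓ hℓ'
      have hc := hC ℓ hℓ'
      have hsv : (0:ℝ) < Real.sqrt (V ℓ) := Real.sqrt_pos.mpr hv
      have hsc : (0:ℝ) < Real.sqrt (C ℓ) := Real.sqrt_pos.mpr hc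
      rw [hNstar ℓ hℓ', key ℓ hℓ', key2 ℓ hℓ']
      field_simp
      linear_combination (-1 : ℝ) * Real.mul_self_sqrt hv.le
    rw [Finset.sum_congr rfl this, ← Finset.mul_sum, ← hSdef]
    field_simp
  have h2 : ∑ ℓ ∈ range (L + 1), Nstar ℓ * C ℓ = (2 / ε ^ 2) * S ^ 2 := by
    have : ∀ ℓ ∈ range (L + 1), Nstar ℓ * C ℓ
        = (2 / ε ^ 2) * S * Real.sqrt (V ℓ * C ℓ) := by
      intro ℓ hℓ
      have hℓ' := Finset.mem_range_succ_iff.mp hℓ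
      have hv := hV ℓ hℓ'
      have hc := hC ℓ hℓ'
      have hsc : (0:ℝ) < Real.sqrt (C ℓ) := Real.sqrt_pos.mpr hc
      rw [hNstar ℓ hℓ', key ℓ hℓ', key2 ℓ hℓ']
      field_simp
      linear_combination (-1 : ℝ) * Real.mul_self_sqrt hc.le
    rw [Finset.sum_congr rfl this, ← Finset.mul_sum, ← hSdef]
    ring
  refine ⟨h1, h2, ?_⟩
  intro N hN hvar
  have cs : S ^ 2 ≤ (∑ ℓ ∈ range (L + 1), V ℓ / N ℓ) * (∑ ℓ ∈ range (L + 1), N ℓ * C ℓ) := by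
    have hterm : ∀ ℓ ∈ range (L + 1),
        Real.sqrt (V ℓ * C ℓ) = Real.sqrt (V ℓ / N ℓ) * Real.sqrt (N ℓ * C ℓ) := by
      intro ℓ hℓ
      have hℓ' := Finset.mem_range_succ_iff.mp hℓ
      have hn := hN ℓ hℓ'
      have hv := hV ℓ hℓ'
      rw [← Real.sqrt_mul (by positivity : (0:ℝ) ≤ V ℓ / N ℓ)]
      congr 1
      field_simp
    calc S ^ 2 = (∑ ℓ ∈ range (L + 1), Real.sqrt (V ℓ / N ℓ) * Real.sqrt (N ℓ * C ℓ)) ^ 2 := by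
          rw [hSdef, Finset.sum_congr rfl hterm]
      _ ≤ (∑ ℓ ∈ range (L + 1), Real.sqrt (V ℓ / N ℓ) ^ 2)
            * (∑ ℓ ∈ range (L + 1), Real.sqrt (N ℓ * C ℓ) ^ 2) :=
          Finset.sum_mul_sq_le_sq_mul_sq (range (L + 1)) _ _
      _ = (∑ ℓ ∈ range (L + 1), V ℓ / N ℓ) * (∑ ℓ ∈ range (L + 1), N ℓ * C ℓ) := by
          congr 1 <;> apply Finset.sum_congr rfl <;> intro ℓ hℓ <;>
            have hℓ' := Finset.mem_range_succ_iff.mp hℓ <;>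
            have hn := hN ℓ hℓ' <;> have hv := hV ℓ hℓ' <;> have hc := hC ℓ hℓ'
          · exact Real.sq_sqrt (by positivity)
          · exact Real.sq_sqrt (by positivity)
  have hvar' := hvar
  have hcost_pos : 0 < ∑ ℓ ∈ range (L + 1), N ℓ * C ℓ := by
    apply Finset.sum_pos
    · intro ℓ hℓ
      have hℓ' := Finset.mem_range_succ_iff.mp hℓ
      exact mul_pos (hN ℓ hℓ') (hC ℓ hℓ')
    · exact ⟨0, Finset.mem_range.mpr (Nat.succ_pos L)⟩
  have := le_trans cs (mul_le_mul_of_nonneg_right hvar hcost_pos.le)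
  rw [div_mul_eq_mul_div, div_le_iff₀ hε2] at *
  nlinarith [this]
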